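/- Let c ∈ ℤⁿ be a coloring vector with color set K_c := {|c_i| : 1 ≤ i ≤ n} \ {0}. For k ∈ K_c define b^(k) ∈ ℝⁿ by b^(k)_i := δ_k(c_i), where δ_k(j) = 1 if j = k, -1 if j = -k, and 0 otherwise. Then {b^(k) : k ∈ K_c} is a basis for the polydiagonal subspace Δ_c, and in particular dim Δ_c = |K_c|. -/
import Mathlib


/-- The maximum of `c₁,…,c_{i-1}` (0-indexed: `c 0, …, c (i-1)`), for `i > 0`. -/
def maxBelow {n : ℕ} (c : Fin n → ℤ) (i : Fin n) (hi : 0 < i.val) : ℤ :=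
  (Finset.Iio i).sup' ⟨⟨0, lt_of_le_of_lt (Nat.zero_le _) i.isLt⟩, Finset.mem_Iio.mpr hi⟩ c

/-- `c` is a coloring vector: the first component is 0 or 1, and each later component
satisfies `-mᵢ ≤ cᵢ ≤ 1 + mᵢ` where `mᵢ` is the max of the preceding components. -/
def IsColoringVec {n : ℕ} (c : Fin n → ℤ) : Prop :=
  (∀ h0 : 0 < n, c ⟨0, h0⟩ = 0 ∨ c ⟨0, h0⟩ = 1) ∧
  ∀ (i : Fin n) (hi : 0 < i.val), -maxBelow c i hi ≤ c i ∧ c i ≤ 1 + maxBelow c i hi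

/-- The polydiagonal subspace `Δ_c` of `ℝⁿ` associated to `c ∈ ℤⁿ`. -/
def DeltaSub {n : ℕ} (c : Fin n → ℤ) : Submodule ℝ (Fin n → ℝ) where
  carrier := {x | ∀ i j : Fin n, (c i = c j → x i = x j) ∧ (c i = -c j → x i = -x j)}
  zero_mem' := by intro i j; simp
  add_mem' := by
    intro a b ha hb i j
    refine ⟨fun h => ?_, fun h => ?_⟩
    · simp [Pi.add_apply, (ha i j).1 h, (hb i j).1 h]
    · simp only [Pi.add_apply, (ha i j).2 h, (hb i j).2 h]; ring
  smul_mem' := by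
    intro r a ha i j
    refine ⟨fun h => ?_, fun h => ?_⟩
    · simp [Pi.smul_apply, (ha i j).1 h]
    · simp only [Pi.smul_apply, (ha i j).2 h, smul_eq_mul]; ring

/-- The set of colors of `c`: the nonzero absolute values of its components. -/
def Kc {n : ℕ} (c : Fin n → ℤ) : Finset ℤ := (Finset.univ.image fun i => |c i|).erase 0

/-- The basis vector `b⁽ᵏ⁾` with `b⁽ᵏ⁾ᵢ = δ_k(cᵢ)`. -/
def bvec {n : ℕ} (c : Fin n → ℤ) (k : ℤ) : Fin n → ℝ :=
  fun i => if c i = k then 1 else if c i = -k then -1 else 0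

/-- Every value `t` with `1 ≤ t ≤ c i` is attained by `c`. -/
lemma attain {n : ℕ} (c : Fin n → ℤ) (hc : IsColoringVec c) :
    ∀ (m : ℕ) (i : Fin n), i.val = m → ∀ t : ℤ, 1 ≤ t → t ≤ c i → ∃ j, c j = t := by
  intro m
  induction m using Nat.strong_induction_on with
  | _ m ih =>
    intro i him t ht htc
    by_cases heq : c i = t
    · exact ⟨i, heq⟩
    have hlt : t < c i := lt_of_le_of_ne htc (Ne.symm heq)
    have hi : 0 < i.val := by
      by_contra h
      have h0 : i = ⟨0, i.pos⟩ := Fin.ext (show i.val = 0 by omega)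
      rcases hc.1 i.pos with h1 | h1 <;> rw [← h0] at h1 <;> omega
    have hb := (hc.2 i hi).2
    have hm : t ≤ maxBelow c i hi := by omega
    obtain ⟨j, hj, hjv⟩ := Finset.exists_mem_eq_sup' (s := Finset.Iio i)
      ⟨⟨0, lt_of_le_of_lt (Nat.zero_le _) i.isLt⟩, Finset.mem_Iio.mpr hi⟩ c
    have hjlt := Finset.mem_Iio.mp hj
    have hjlt' : (j : ℕ) < (i : ℕ) := hjlt
    exact ih j.val (by omega) j rfl t ht (by rw [maxBelow, hjv] at hm; exact hm)

/-- Every color in `Kc c` is attained with positive sign. -/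
lemma exists_pos_rep {n : ℕ} (c : Fin n → ℤ) (hc : IsColoringVec c) {k : ℤ}
    (hk : k ∈ Kc c) : ∃ j, c j = k := by
  obtain ⟨hk0, hmem⟩ := Finset.mem_erase.mp hk
  obtain ⟨i, -, hik⟩ := Finset.mem_image.mp hmem
  have hkpos : 0 < k := lt_of_le_of_ne (hik ▸ abs_nonneg _) (Ne.symm hk0)
  rcases (abs_eq hkpos.le).mp hik with h | h
  · exact ⟨i, h⟩
  · have hi : 0 < i.val := by
      by_contra hh
      have h0 : i = ⟨0, i.pos⟩ := Fin.ext (show i.val = 0 by omega)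
      rcases hc.1 i.pos with h1 | h1 <;> rw [← h0] at h1 <;> omega
    have hb := (hc.2 i hi).1
    have hm : k ≤ maxBelow c i hi := by omega
    obtain ⟨j, hj, hjv⟩ := Finset.exists_mem_eq_sup' (s := Finset.Iio i)
      ⟨⟨0, lt_of_le_of_lt (Nat.zero_le _) i.isLt⟩, Finset.mem_Iio.mpr hi⟩ c
    exact attain c hc j.val j rfl k hkpos (by rw [maxBelow, hjv] at hm; exact hm)

lemma kc_pos {n : ℕ} {c : Fin n → ℤ} {k : ℤ} (hk : k ∈ Kc c) : 0 < k := by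
  obtain ⟨hk0, hmem⟩ := Finset.mem_erase.mp hk
  obtain ⟨i, -, hik⟩ := Finset.mem_image.mp hmem
  exact lt_of_le_of_ne (hik ▸ abs_nonneg _) (Ne.symm hk0)

lemma bvec_zero {n : ℕ} {c : Fin n → ℤ} {k : ℤ} (hk : 0 < k) {i : Fin n}
    (h : |c i| ≠ k) : bvec c k i = 0 := by
  unfold bvec
  rw [if_neg, if_neg]
  · intro hh; exact h (by rw [hh, abs_neg, abs_of_pos hk])
  · intro hh; exact h (by rw [hh, abs_of_pos hk])

/-- `{b⁽ᵏ⁾ : k ∈ K_c}` is a basis of `Δ_c`; in particular `dim Δ_c = |K_c|`. -/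
theorem bvec_basis {n : ℕ} (c : Fin n → ℤ) (hc : IsColoringVec c) :
    LinearIndependent ℝ (fun k : (Kc c) => bvec c k.1) ∧
    Submodule.span ℝ (Set.range fun k : (Kc c) => bvec c k.1) = DeltaSub c ∧
    Module.finrank ℝ (DeltaSub c) = (Kc c).card := by
  classical
  have hli : LinearIndependent ℝ (fun k : (Kc c) => bvec c k.1) := by
    rw [Fintype.linearIndependent_iff]
    intro g hg k
    obtain ⟨j, hj⟩ := exists_pos_rep c hc k.2
    have h2 : ∑ k' : (Kc c), g k' * bvec c k'.1 j = 0 := by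
      have := congrFun hg j
      simpa using this
    rw [Finset.sum_eq_single k] at h2
    · have hb1 : bvec c k.1 j = 1 := by unfold bvec; rw [if_pos hj]
      rwa [hb1, mul_one] at h2
    · intro k' _ hne
      have : bvec c k'.1 j = 0 := by
        refine bvec_zero (kc_pos k'.2) ?_
        rw [hj, abs_of_pos (kc_pos k.2)]
        intro hh
        exact hne (Subtype.ext hh.symm)
      rw [this, mul_zero]
    · intro h; exact absurd (Finset.mem_univ k) h
  have hspan : Submodule.span ℝ (Set.range fun k : (Kc c) => bvec c k.1) = DeltaSub c := by
    apply le_antisymm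
    · rw [Submodule.span_le]
      rintro _ ⟨k, rfl⟩
      have hk := kc_pos k.2
      intro i j
      refine ⟨fun h => by simp [bvec, h], fun h => ?_⟩
      simp only [bvec]
      split_ifs <;> first | (exfalso; omega) | norm_num
    · intro x hx
      set f : ℤ → ℝ := fun k => if h : ∃ j, c j = k then x h.choose else 0 with hf
      have hrepr : x = ∑ k ∈ Kc c, f k • bvec c k := by
        funext i
        rw [Finset.sum_apply]
        simp only [Pi.smul_apply, smul_eq_mul]
        by_cases h0 : c i = 0
        · have hx0 : x i = 0 := by
            have := (hx i i).2 (by rw [h0]; ring)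
            linarith
          rw [hx0]
          symm
          apply Finset.sum_eq_zero
          intro k hk
          rw [bvec_zero (kc_pos hk) (by rw [h0]; simpa using (kc_pos hk).ne), mul_zero]
        · have hk0 : |c i| ∈ Kc c := Finset.mem_erase.mpr
            ⟨by simpa using h0, Finset.mem_image.mpr ⟨i, Finset.mem_univ i, rfl⟩⟩
          rw [Finset.sum_eq_single (|c i|)]
          · obtain ⟨j, hj⟩ := exists_pos_rep c hc hk0
            have hex : ∃ j', c j' = |c i| := ⟨j, hj⟩
            have hfv : f (|c i|) = x j := by
              simp only [hf, dif_pos hex]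
              exact (hx hex.choose j).1 (by rw [hex.choose_spec, hj])
            rw [hfv]
            rcases abs_cases (c i) with ⟨ha, -⟩ | ⟨ha, hneg⟩
            · have hb1 : bvec c (|c i|) i = 1 := by unfold bvec; rw [if_pos ha.symm]
              rw [hb1, mul_one]
              exact (hx i j).1 (by rw [hj]; exact ha.symm)
            · have hb1 : bvec c (|c i|) i = -1 := by
                unfold bvec
                rw [if_neg (by omega), if_pos (by omega)]
              rw [hb1]
              have := (hx i j).2 (by rw [hj]; omega)
              rw [this]; ring
          · intro k hkmem hne
            rw [bvec_zero (kc_pos hkmem) (Ne.symm hne), mul_zero]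
          · intro h; exact absurd hk0 h
      rw [hrepr]
      apply Submodule.sum_mem
      intro k hk
      exact Submodule.smul_mem _ _ (Submodule.subset_span ⟨⟨k, hk⟩, rfl⟩)
  refine ⟨hli, hspan, ?_⟩
  have hfr := finrank_span_eq_card hli
  rw [hspan] at hfr
  rw [hfr, Fintype.card_coe]
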